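/- There exists a constant c₂ > 0 depending only on n and p (and in particular independent of γ₁ and γ₂) such that for every p-potential F with constants γ₁, γ₂ and induced extra stress S, and for all symmetric matrices B, C ∈ M^{n×n}, one has |S(B) − S(C)| ≤ c₂ γ₂ (1 + |B|² + |C|²)^{(p−2)/2} |B − C|. -/

import Mathlib

open scoped BigOperators

noncomputable section

/-- Frobenius inner product on `n × n` real matrices (represented as functions). -/
def frobInner {n : ℕ} (A B : Fin n → Fin n → ℝ) : ℝ := ∑ i, ∑ j, A i j * B i j

/-- Frobenius norm. -/
def frobNorm {n : ℕ} (A : Fin n → Fin n → ℝ) : ℝ := Real.sqrt (frobInner A A)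

/-- A symmetric matrix. -/
def IsSymmMat {n : ℕ} (A : Fin n → Fin n → ℝ) : Prop := ∀ i j, A i j = A j i

/-- The induced potential `Φ(B) = F(|B|)`. -/
def inducedPot {n : ℕ} (F : ℝ → ℝ) (B : Fin n → Fin n → ℝ) : ℝ := F (frobNorm B)

/-- The extra stress induced by `F`: `S(B) = F'(|B|) B / |B|` for `B ≠ 0`, `S(0) = 0`. -/
def stress {n : ℕ} (F : ℝ → ℝ) (B : Fin n → Fin n → ℝ) : Fin n → Fin n → ℝ :=
  if B = 0 then 0 else (deriv F (frobNorm B) / frobNorm B) • B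

/-- `F` is a `p`-potential with constants `γ₁, γ₂ > 0`. -/
structure IsPPotential (n : ℕ) (p γ₁ γ₂ : ℝ) (F : ℝ → ℝ) : Prop where
  convex : ConvexOn ℝ (Set.Ici (0 : ℝ)) F
  smooth : ContDiffOn ℝ 2 F (Set.Ici (0 : ℝ))
  nonneg : ∀ x : ℝ, 0 ≤ x → 0 ≤ F x
  zero : F 0 = 0
  deriv_zero : deriv F 0 = 0
  gamma₁_pos : 0 < γ₁
  gamma₂_pos : 0 < γ₂
  lower : ∀ B C : Fin n → Fin n → ℝ, IsSymmMat B → IsSymmMat C →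
    γ₁ * (1 + frobNorm B ^ 2) ^ ((p - 2) / 2) * frobNorm C ^ 2 ≤
      iteratedFDeriv ℝ 2 (inducedPot F) B ![C, C]
  upper : ∀ B C D : Fin n → Fin n → ℝ, IsSymmMat B → IsSymmMat C → IsSymmMat D →
    |iteratedFDeriv ℝ 2 (inducedPot F) B ![C, D]| ≤
      γ₂ * (1 + frobNorm B ^ 2) ^ ((p - 2) / 2) * frobNorm C * frobNorm D

namespace Aux

variable {n : ℕ}

abbrev E (n : ℕ) := Fin n → Fin n → ℝ

def toE (A : E n) : EuclideanSpace ℝ (Fin n × Fin n) := WithLp.toLp 2 (fun p => A p.1 p.2)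

lemma toE_add (A B : E n) : toE (A + B) = toE A + toE B := rfl
lemma toE_sub (A B : E n) : toE (A - B) = toE A - toE B := rfl
lemma toE_smul (c : ℝ) (A : E n) : toE (c • A) = c • toE A := rfl
lemma toE_zero : toE (0 : E n) = 0 := rfl
lemma toE_inj {A B : E n} (h : toE A = toE B) : A = B := by
  funext i j; exact congrFun (congrArg WithLp.ofLp h) (i, j)

lemma frobNorm_eq (A : E n) : frobNorm A = ‖toE A‖ := by
  rw [EuclideanSpace.norm_eq, frobNorm, frobInner]
  congr 1
  rw [Fintype.sum_prod_type]
  refine Finset.sum_congr rfl fun i _ => Finset.sum_congr rfl fun j _ => ?_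
  simp [toE, Real.norm_eq_abs, sq_abs, sq]

lemma frobNorm_nonneg (A : E n) : 0 ≤ frobNorm A := by rw [frobNorm_eq]; positivity

lemma frobNorm_zero : frobNorm (0 : E n) = 0 := by simp [frobNorm_eq, toE_zero]

lemma frobNorm_eq_zero_iff {A : E n} : frobNorm A = 0 ↔ A = 0 := by
  rw [frobNorm_eq, norm_eq_zero]
  exact ⟨fun h => toE_inj (by rw [h, toE_zero]), fun h => by rw [h, toE_zero]⟩

lemma frobNorm_pos {A : E n} (h : A ≠ 0) : 0 < frobNorm A :=
  lt_of_le_of_ne (frobNorm_nonneg A) (fun h' => h (frobNorm_eq_zero_iff.mp h'.symm))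

lemma frobNorm_smul (c : ℝ) (A : E n) : frobNorm (c • A) = |c| * frobNorm A := by
  rw [frobNorm_eq, frobNorm_eq, toE_smul, norm_smul, Real.norm_eq_abs]

lemma frobNorm_sub_le (A B C : E n) : frobNorm (A - C) ≤ frobNorm (A - B) + frobNorm (B - C) := by
  rw [frobNorm_eq, frobNorm_eq, frobNorm_eq, toE_sub, toE_sub, toE_sub]
  exact norm_sub_le_norm_sub_add_norm_sub _ _ _

lemma abs_frobNorm_sub (A B : E n) : |frobNorm A - frobNorm B| ≤ frobNorm (A - B) := by
  rw [frobNorm_eq, frobNorm_eq, frobNorm_eq, toE_sub]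
  exact abs_norm_sub_norm_le _ _

lemma frobNorm_neg (A : E n) : frobNorm (-A) = frobNorm A := by
  rw [frobNorm_eq, frobNorm_eq]; exact norm_neg (toE A)

lemma frobNorm_sub_le' (A B : E n) : frobNorm (A - B) ≤ frobNorm A + frobNorm B := by
  rw [frobNorm_eq, frobNorm_eq, frobNorm_eq, toE_sub]; exact norm_sub_le _ _

lemma frobNorm_add_le (A B : E n) : frobNorm (A + B) ≤ frobNorm A + frobNorm B := by
  rw [frobNorm_eq, frobNorm_eq, frobNorm_eq, toE_add]; exact norm_add_le _ _


/-! ### Calculus of the induced potential -/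

def cm (i j : Fin n) : E n →L[ℝ] ℝ :=
  (ContinuousLinearMap.proj j).comp (ContinuousLinearMap.proj (R := ℝ) (φ := fun _ : Fin n => Fin n → ℝ) i)

@[simp] lemma cm_apply (i j : Fin n) (X : E n) : cm i j X = X i j := rfl

def ipc (X : E n) : E n →L[ℝ] ℝ := ∑ i, ∑ j, X i j • cm i j

lemma ipc_apply (X Y : E n) : ipc X Y = frobInner X Y := by
  simp [ipc, frobInner, ContinuousLinearMap.sum_apply]

lemma hasFDerivAt_Q (X : E n) :
    HasFDerivAt (fun Y : E n => frobInner Y Y) ((2:ℝ) • ipc X) X := by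
  have h1 : HasFDerivAt (fun Y : E n => ∑ i, ∑ j, (cm i j Y) * (cm i j Y))
      (∑ i : Fin n, ∑ j : Fin n, ((cm i j X) • cm i j + (cm i j X) • cm i j)) X := by
    apply HasFDerivAt.fun_sum; intro i _
    apply HasFDerivAt.fun_sum; intro j _
    exact ((cm i j).hasFDerivAt).mul ((cm i j).hasFDerivAt)
  have h2 : (fun Y : E n => ∑ i, ∑ j, (cm i j Y) * (cm i j Y))
      = fun Y : E n => frobInner Y Y := by
    funext Y; simp [frobInner]
  rw [h2] at h1
  convert h1 using 1
  ext Y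
  simp [ipc, ContinuousLinearMap.sum_apply, Finset.smul_sum]
  refine Finset.sum_congr rfl fun i _ => Finset.sum_congr rfl fun j _ => ?_
  ring

lemma frobInner_self_pos {X : E n} (hX : X ≠ 0) : 0 < frobInner X X :=
  Real.sqrt_pos.mp (frobNorm_pos hX)

lemma hasFDerivAt_frobNorm {X : E n} (hX : X ≠ 0) :
    HasFDerivAt (frobNorm (n := n)) ((frobNorm X)⁻¹ • ipc X) X := by
  have hQ : frobInner X X ≠ 0 := ne_of_gt (frobInner_self_pos hX)
  have hq : HasFDerivAt (fun Y : E n => frobInner Y Y) ((2:ℝ) • ipc X) X := hasFDerivAt_Q X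
  have h := (Real.hasDerivAt_sqrt hQ).comp_hasFDerivAt (f := fun Y : E n => frobInner Y Y) X hq
  have h2 : ((fun y => Real.sqrt y) ∘ fun Y : E n => frobInner Y Y) = frobNorm (n := n) := rfl
  rw [h2] at h
  refine h.congr_fderiv ?_
  symm
  rw [smul_smul, frobNorm]
  congr 1
  rw [one_div]
  rw [mul_comm (2 : ℝ)] at *
  rw [mul_inv, mul_assoc, inv_mul_cancel₀ (two_ne_zero), mul_one]

lemma hasFDerivAt_Phi {F : ℝ → ℝ} {X : E n} (hX : X ≠ 0)
    (hF : HasDerivAt F (deriv F (frobNorm X)) (frobNorm X)) :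
    HasFDerivAt (inducedPot F) ((deriv F (frobNorm X) / frobNorm X) • ipc X) X := by
  have h := hF.comp_hasFDerivAt (f := frobNorm (n := n)) X (hasFDerivAt_frobNorm hX)
  have h2 : (F ∘ frobNorm (n := n)) = inducedPot F := rfl
  rw [h2] at h
  refine h.congr_fderiv ?_
  symm
  rw [smul_smul, div_eq_mul_inv]

lemma contDiff_Q : ContDiff ℝ 2 (fun Y : E n => frobInner Y Y) := by
  have : (fun Y : E n => frobInner Y Y)
      = fun Y : E n => ∑ i, ∑ j, (cm i j Y) * (cm i j Y) := by
    funext Y; simp [frobInner]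
  rw [this]
  apply ContDiff.sum; intro i _
  apply ContDiff.sum; intro j _
  exact ((cm i j).contDiff).mul ((cm i j).contDiff)

lemma contDiffAt_Phi {F : ℝ → ℝ} {X : E n} (hX : X ≠ 0)
    (hF : ContDiffAt ℝ 2 F (frobNorm X)) : ContDiffAt ℝ 2 (inducedPot F) X := by
  have h1 : ContDiffAt ℝ 2 (frobNorm (n := n)) X := by
    have := (Real.contDiffAt_sqrt (x := frobInner X X)
      (ne_of_gt (frobInner_self_pos hX))).comp (g := fun y => Real.sqrt y)
      (f := fun Y : E n => frobInner Y Y) X contDiff_Q.contDiffAt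
    exact this
  exact hF.comp (g := F) (f := frobNorm (n := n)) X h1


/-! ### The basis matrix and second derivative formula -/

def em (i0 : Fin n) : E n := fun i j => if i = i0 ∧ j = i0 then 1 else 0

lemma em_symm (i0 : Fin n) : IsSymmMat (em i0) := by
  intro i j; simp only [em]; by_cases h : i = i0 <;> by_cases h' : j = i0 <;> simp [h, h', and_comm]

lemma frobInner_em (i0 : Fin n) (X : E n) : frobInner X (em i0) = X i0 i0 := by
  simp only [frobInner, em]
  rw [Finset.sum_eq_single i0]
  · rw [Finset.sum_eq_single i0]
    · simp
    · intro j _ hj; simp [hj]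
    · simp
  · intro i _ hi
    apply Finset.sum_eq_zero; intro j _; simp [hi]
  · simp

lemma frobNorm_em (i0 : Fin n) : frobNorm (em i0) = 1 := by
  have : frobInner (em i0) (em i0) = 1 := by
    have := frobInner_em i0 (em i0); rw [this]; simp [em]
  rw [frobNorm, this, Real.sqrt_one]

lemma em_ne_zero (i0 : Fin n) : em i0 ≠ 0 := by
  intro h
  have := frobNorm_em i0
  rw [h, frobNorm_zero] at this
  norm_num at this

lemma frobNorm_smul_em (i0 : Fin n) (t : ℝ) : frobNorm (t • em i0) = |t| := by
  rw [frobNorm_smul, frobNorm_em, mul_one]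

lemma smul_em_ne_zero (i0 : Fin n) {t : ℝ} (ht : t ≠ 0) : t • em i0 ≠ 0 := by
  intro h
  have := frobNorm_smul_em i0 t
  rw [h, frobNorm_zero] at this
  exact ht (abs_eq_zero.mp this.symm)

lemma smul_em_symm (i0 : Fin n) (t : ℝ) : IsSymmMat (t • em i0) := by
  intro i j
  have := em_symm i0 i j
  simp only [Pi.smul_apply, smul_eq_mul, this]

variable {F : ℝ → ℝ}

lemma hasDerivAt_F (hF : ContDiffOn ℝ 2 F (Set.Ici 0)) {r : ℝ} (hr : 0 < r) :
    HasDerivAt F (deriv F r) r :=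
  ((hF.contDiffAt (Ici_mem_nhds hr)).differentiableAt two_ne_zero).hasDerivAt

lemma differentiableAt_derivF (hF : ContDiffOn ℝ 2 F (Set.Ici 0)) {r : ℝ} (hr : 0 < r) :
    DifferentiableAt ℝ (deriv F) r := by
  have h2 : ContDiffAt ℝ 2 F r := hF.contDiffAt (Ici_mem_nhds hr)
  have h1 : ContDiffAt ℝ 1 (fderiv ℝ F) r := h2.fderiv_right (by norm_num)
  have hd : DifferentiableAt ℝ (fderiv ℝ F) r := h1.differentiableAt one_ne_zero
  have : (deriv F) = fun x => fderiv ℝ F x 1 := by funext x; rfl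
  rw [this]
  exact hd.clm_apply (differentiableAt_const _)

lemma hasDerivAt_derivF (hF : ContDiffOn ℝ 2 F (Set.Ici 0)) {r : ℝ} (hr : 0 < r) :
    HasDerivAt (deriv F) (deriv (deriv F) r) r :=
  (differentiableAt_derivF hF hr).hasDerivAt

/-- first derivative values: `fderiv Φ (t • em) em = deriv F |t| * (t / |t|)`. -/
lemma fderiv_Phi_smul_em (hF : ContDiffOn ℝ 2 F (Set.Ici 0)) (i0 : Fin n) {t : ℝ} (ht : t ≠ 0) :
    fderiv ℝ (inducedPot F) (t • em i0) (em i0) = deriv F |t| * (t / |t|) := by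
  have hX : t • em i0 ≠ 0 := smul_em_ne_zero i0 ht
  have hN : frobNorm (t • em i0) = |t| := frobNorm_smul_em i0 t
  have habs : 0 < |t| := abs_pos.mpr ht
  have hd : HasFDerivAt (inducedPot F)
      ((deriv F (frobNorm (t • em i0)) / frobNorm (t • em i0)) • ipc (t • em i0)) (t • em i0) :=
    hasFDerivAt_Phi hX (by rw [hN]; exact hasDerivAt_F hF habs)
  rw [hd.fderiv]
  simp only [ContinuousLinearMap.coe_smul', Pi.smul_apply, smul_eq_mul, ipc_apply, hN]
  rw [frobInner_em]
  simp only [Pi.smul_apply, em, smul_eq_mul]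
  norm_num
  ring

/-- The function `X ↦ fderiv Φ X (em i0)` near a nonzero point equals the explicit formula. -/
lemma fderiv_Phi_eventually (hF : ContDiffOn ℝ 2 F (Set.Ici 0)) (i0 : Fin n)
    {X₀ : E n} (hX₀ : X₀ ≠ 0) :
    (fun X => fderiv ℝ (inducedPot F) X (em i0)) =ᶠ[nhds X₀]
      (fun X => (deriv F (frobNorm X) / frobNorm X) * X i0 i0) := by
  have hopen : IsOpen {X : E n | X ≠ 0} := isOpen_ne
  filter_upwards [hopen.mem_nhds hX₀] with X hX
  have hN : 0 < frobNorm X := frobNorm_pos hX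
  have hd : HasFDerivAt (inducedPot F)
      ((deriv F (frobNorm X) / frobNorm X) • ipc X) X :=
    hasFDerivAt_Phi hX (hasDerivAt_F hF hN)
  rw [hd.fderiv]
  simp only [ContinuousLinearMap.coe_smul', Pi.smul_apply, smul_eq_mul, ipc_apply]
  rw [frobInner_em]

/-- Second derivative in direction `em` at `t • em` equals `F''(t)`. -/
lemma iterated_two_eq (hF : ContDiffOn ℝ 2 F (Set.Ici 0)) (i0 : Fin n) {t : ℝ} (ht : 0 < t) :
    iteratedFDeriv ℝ 2 (inducedPot F) (t • em i0) ![em i0, em i0] = deriv (deriv F) t := by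
  set X₀ : E n := t • em i0 with hX₀def
  have hX₀ : X₀ ≠ 0 := smul_em_ne_zero i0 (ne_of_gt ht)
  have hN₀ : frobNorm X₀ = t := by rw [hX₀def, frobNorm_smul_em, abs_of_pos ht]
  have hcd : ContDiffAt ℝ 2 (inducedPot F) X₀ :=
    contDiffAt_Phi hX₀ (by rw [hN₀]; exact hF.contDiffAt (Ici_mem_nhds ht))
  have hdiff : DifferentiableAt ℝ (fderiv ℝ (inducedPot F)) X₀ :=
    (hcd.fderiv_right (m := 1) (by norm_num)).differentiableAt one_ne_zero
  rw [iteratedFDeriv_two_apply]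
  simp only [Matrix.cons_val_zero, Matrix.cons_val_one, Matrix.head_cons]
  -- turn into derivative of X ↦ fderiv Φ X em
  have hswap : fderiv ℝ (fun X => fderiv ℝ (inducedPot F) X (em i0)) X₀ (em i0)
      = fderiv ℝ (fderiv ℝ (inducedPot F)) X₀ (em i0) (em i0) := by
    rw [fderiv_clm_apply hdiff (differentiableAt_const (em i0))]
    simp
  rw [← hswap]
  rw [(fderiv_Phi_eventually hF i0 hX₀).fderiv_eq]
  -- now compute the derivative of the explicit formula
  have hg : HasDerivAt (fun r : ℝ => deriv F r / r)
      ((deriv (deriv F) t * t - deriv F t * 1) / t ^ 2) t :=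
    (hasDerivAt_derivF hF ht).div (hasDerivAt_id t) (ne_of_gt ht)
  have hNd : HasFDerivAt (frobNorm (n := n)) ((frobNorm X₀)⁻¹ • ipc X₀) X₀ :=
    hasFDerivAt_frobNorm hX₀
  have hpsi1 : HasFDerivAt (fun X : E n => deriv F (frobNorm X) / frobNorm X)
      (((deriv (deriv F) t * t - deriv F t * 1) / t ^ 2) • ((frobNorm X₀)⁻¹ • ipc X₀)) X₀ := by
    rw [← hN₀] at hg
    have h2 := hg.comp_hasFDerivAt (f := frobNorm (n := n)) X₀ hNd
    rw [hN₀] at h2 ⊢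
    exact h2
  have hpsi : HasFDerivAt (fun X : E n => (deriv F (frobNorm X) / frobNorm X) * X i0 i0)
      ((deriv F (frobNorm X₀) / frobNorm X₀) • (cm i0 i0 : E n →L[ℝ] ℝ) +
        (cm i0 i0 X₀) • (((deriv (deriv F) t * t - deriv F t * 1) / t ^ 2) •
          ((frobNorm X₀)⁻¹ • ipc X₀))) X₀ := by
    have := hpsi1.mul (c := fun X : E n => deriv F (frobNorm X) / frobNorm X)
      ((cm i0 i0).hasFDerivAt (x := X₀))
    exact this
  rw [hpsi.fderiv]
  simp only [ContinuousLinearMap.add_apply, ContinuousLinearMap.coe_smul', Pi.smul_apply,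
    smul_eq_mul, ipc_apply, hN₀, cm_apply]
  rw [frobInner_em]
  have hem : (em i0 : E n) i0 i0 = 1 := by simp [em]
  have hXem : (X₀ : E n) i0 i0 = t := by
    rw [hX₀def]; simp only [Pi.smul_apply, hem, smul_eq_mul, mul_one]
  rw [hem, hXem]
  field_simp
  ring


/-! ### Limit of `deriv F` at `0⁺` -/

open Filter Topology Set

lemma tendsto_derivF_zero (hF : ContDiffOn ℝ 2 F (Set.Ici 0)) (i0 : Fin n)
    (hdiff0 : DifferentiableAt ℝ (fderiv ℝ (inducedPot F : E n → ℝ)) 0) :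
    Tendsto (deriv F) (𝓝[>] (0:ℝ)) (𝓝 0) := by
  set d₀ := derivWithin F (Set.Ici 0) 0 with hd₀
  have h1 : Tendsto (deriv F) (𝓝[>] (0:ℝ)) (𝓝 d₀) := by
    have hcont : ContinuousOn (derivWithin F (Set.Ici 0)) (Set.Ici 0) :=
      hF.continuousOn_derivWithin (uniqueDiffOn_Ici 0) (by norm_num)
    have h0 : Tendsto (derivWithin F (Set.Ici 0)) (𝓝[Set.Ici 0] (0:ℝ)) (𝓝 d₀) :=
      hcont 0 (Set.self_mem_Ici)
    have h0' : Tendsto (derivWithin F (Set.Ici 0)) (𝓝[>] (0:ℝ)) (𝓝 d₀) :=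
      h0.mono_left (nhdsWithin_mono 0 Set.Ioi_subset_Ici_self)
    refine h0'.congr' ?_
    filter_upwards [self_mem_nhdsWithin] with t ht
    exact derivWithin_of_mem_nhds (Ici_mem_nhds ht)
  -- continuity of X ↦ fderiv Φ X em at 0
  have hG : ContinuousAt (fun X : E n => fderiv ℝ (inducedPot F) X (em i0)) 0 := by
    exact ((ContinuousLinearMap.apply ℝ ℝ (em i0)).continuous.continuousAt).comp
      hdiff0.continuousAt
  have hsm : Continuous (fun t : ℝ => t • em i0) := by
    exact (continuous_id.smul continuous_const)
  have hGt : ContinuousAt (fun t : ℝ => fderiv ℝ (inducedPot F) (t • em i0) (em i0)) 0 := by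
    have hG' : ContinuousAt (fun X : E n => fderiv ℝ (inducedPot F) X (em i0))
        ((0:ℝ) • em i0) := by rw [zero_smul]; exact hG
    exact hG'.comp (x := (0:ℝ)) (hsm.continuousAt)
  set L := fderiv ℝ (inducedPot F) ((0:ℝ) • em i0) (em i0) with hL
  have hright : Tendsto (fun t : ℝ => fderiv ℝ (inducedPot F) (t • em i0) (em i0))
      (𝓝[>] (0:ℝ)) (𝓝 L) := hGt.continuousWithinAt.tendsto
  have hleft : Tendsto (fun t : ℝ => fderiv ℝ (inducedPot F) (t • em i0) (em i0))
      (𝓝[<] (0:ℝ)) (𝓝 L) := hGt.continuousWithinAt.tendsto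
  -- on the right, the function equals deriv F t
  have hre : Tendsto (deriv F) (𝓝[>] (0:ℝ)) (𝓝 L) := by
    refine hright.congr' ?_
    filter_upwards [self_mem_nhdsWithin] with t ht
    rw [fderiv_Phi_smul_em hF i0 (ne_of_gt ht), abs_of_pos ht, div_self (ne_of_gt ht), mul_one]
  have hLd : L = d₀ := tendsto_nhds_unique hre h1
  -- on the left, the function equals -(deriv F (-t))
  have hnegt : Tendsto (fun t : ℝ => -t) (𝓝[<] (0:ℝ)) (𝓝[>] (0:ℝ)) := by
    have : Tendsto (fun t : ℝ => -t) (𝓝[<] (0:ℝ)) (𝓝[>] (-(0:ℝ))) := tendsto_neg_nhdsLT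
    simpa using this
  have hle : Tendsto (fun t : ℝ => -(deriv F (-t))) (𝓝[<] (0:ℝ)) (𝓝 (-d₀)) :=
    (h1.comp hnegt).neg
  have hle' : Tendsto (fun t : ℝ => fderiv ℝ (inducedPot F) (t • em i0) (em i0))
      (𝓝[<] (0:ℝ)) (𝓝 (-d₀)) := by
    refine hle.congr' ?_
    filter_upwards [self_mem_nhdsWithin] with t ht
    rw [fderiv_Phi_smul_em hF i0 (ne_of_lt ht), abs_of_neg ht]
    rw [div_neg, div_self (ne_of_lt ht)]
    ring
  have hLd' : -d₀ = L := tendsto_nhds_unique hle' hleft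
  have : d₀ = 0 := by linarith [hLd, hLd'.symm ▸ hLd]
  rw [this] at h1; exact h1


/-! ### Scalar estimates on `deriv F` -/

lemma derivF_lipschitz (hF : ContDiffOn ℝ 2 F (Set.Ici 0)) {M a b : ℝ}
    (ha : 0 < a) (hab : a ≤ b)
    (hM : ∀ s, a ≤ s → s ≤ b → |deriv (deriv F) s| ≤ M) :
    |deriv F b - deriv F a| ≤ M * (b - a) := by
  rcases eq_or_lt_of_le hab with rfl | hab'
  · simp
  · have hdiff : DifferentiableOn ℝ (deriv F) (Set.Icc a b) := fun x hx =>
      (differentiableAt_derivF hF (lt_of_lt_of_le ha hx.1)).differentiableWithinAt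
    have hbound : ∀ x ∈ Set.Ico a b, ‖derivWithin (deriv F) (Set.Icc a b) x‖ ≤ M := by
      intro x hx
      rw [(differentiableAt_derivF hF (lt_of_lt_of_le ha hx.1)).derivWithin
        (uniqueDiffOn_Icc hab' x ⟨hx.1, le_of_lt hx.2⟩)]
      rw [Real.norm_eq_abs]; exact hM x hx.1 (le_of_lt hx.2)
    have := norm_image_sub_le_of_norm_deriv_le_segment hdiff hbound b
      (Set.right_mem_Icc.mpr hab)
    rw [Real.norm_eq_abs] at this; exact this

lemma derivF_mono (hF : ContDiffOn ℝ 2 F (Set.Ici 0))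
    (hpos : ∀ t : ℝ, 0 < t → 0 ≤ deriv (deriv F) t) {a b : ℝ}
    (ha : 0 < a) (hab : a ≤ b) : deriv F a ≤ deriv F b := by
  rcases eq_or_lt_of_le hab with rfl | hab'
  · exact le_rfl
  · have hmono := monotoneOn_of_deriv_nonneg (convex_Icc a b)
      (fun x hx => ((differentiableAt_derivF hF (lt_of_lt_of_le ha hx.1)).continuousAt
        ).continuousWithinAt)
      (fun x hx => by
        rw [interior_Icc] at hx
        exact (differentiableAt_derivF hF (lt_of_lt_of_le ha (le_of_lt hx.1))
          ).differentiableWithinAt)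
      (fun x hx => by
        rw [interior_Icc] at hx
        exact hpos x (lt_of_lt_of_le ha (le_of_lt hx.1)))
    exact hmono (Set.left_mem_Icc.mpr hab) (Set.right_mem_Icc.mpr hab) hab

lemma comparisonG (hF : ContDiffOn ℝ 2 F (Set.Ici 0)) {c e t ε σ : ℝ}
    (hε : 0 < ε) (hεt : ε < t) (hσ : σ = 1 ∨ σ = -1)
    (hbound : ∀ s, 0 < s → s ≤ t → σ * deriv (deriv F) s ≤ c * e * s ^ (e - 1)) :
    σ * deriv F t - σ * deriv F ε ≤ c * t ^ e - c * ε ^ e := by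
  set G := fun s : ℝ => c * s ^ e - σ * deriv F s with hG
  have hd : ∀ s : ℝ, 0 < s → HasDerivAt G (c * (e * s ^ (e - 1)) - σ * deriv (deriv F) s) s := by
    intro s hs
    exact (((Real.hasDerivAt_rpow_const (p := e) (Or.inl (ne_of_gt hs))).const_mul c)).sub
      ((hasDerivAt_derivF hF hs).const_mul σ)
  have hmono := monotoneOn_of_deriv_nonneg (convex_Icc ε t)
    (fun x hx => ((hd x (lt_of_lt_of_le hε hx.1)).differentiableAt.continuousAt
      ).continuousWithinAt)
    (fun x hx => by
      rw [interior_Icc] at hx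
      exact (hd x (lt_of_lt_of_le hε (le_of_lt hx.1))).differentiableAt.differentiableWithinAt)
    (fun x hx => by
      rw [interior_Icc] at hx
      have hx1 : 0 < x := lt_of_lt_of_le hε (le_of_lt hx.1)
      rw [(hd x hx1).deriv]
      have := hbound x hx1 (le_of_lt hx.2)
      linarith [this])
  have h := hmono (Set.left_mem_Icc.mpr (le_of_lt hεt)) (Set.right_mem_Icc.mpr (le_of_lt hεt))
    (le_of_lt hεt)
  simp only [hG] at h
  linarith [h]

lemma abs_derivF_le_aux (hF : ContDiffOn ℝ 2 F (Set.Ici 0))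
    (htend : Filter.Tendsto (deriv F) (nhdsWithin 0 (Set.Ioi 0)) (nhds 0))
    {c e t : ℝ} (hc : 0 ≤ c) (ht : 0 < t)
    (hbound : ∀ s, 0 < s → s ≤ t → |deriv (deriv F) s| ≤ c * e * s ^ (e - 1)) :
    |deriv F t| ≤ c * t ^ e := by
  have key : ∀ ε : ℝ, 0 < ε → ε < t → |deriv F t| ≤ c * t ^ e + |deriv F ε| := by
    intro ε hε hεt
    have hεe : (0:ℝ) ≤ c * ε ^ e := by positivity
    have h1 := comparisonG hF (c := c) (e := e) hε hεt (Or.inl rfl)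
      (fun s hs hst => le_trans (le_abs_self _) (by simpa using hbound s hs hst))
    have h2 := comparisonG hF (c := c) (e := e) hε hεt (Or.inr rfl)
      (fun s hs hst => by
        have := hbound s hs hst
        have := neg_abs_le (deriv (deriv F) s)
        linarith)
    simp only [one_mul, neg_one_mul] at h1 h2
    rw [abs_le]
    constructor
    · have := abs_nonneg (deriv F ε)
      have := neg_abs_le (deriv F ε)
      linarith
    · have := le_abs_self (deriv F ε)
      linarith
  have hev : ∀ᶠ ε in nhdsWithin 0 (Set.Ioi 0), |deriv F t| ≤ c * t ^ e + |deriv F ε| := by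
    filter_upwards [Ioo_mem_nhdsGT_of_mem (Set.mem_Ico.mpr ⟨le_refl (0:ℝ), ht⟩)] with ε hε
    exact key ε hε.1 hε.2
  have hlim : Filter.Tendsto (fun ε : ℝ => c * t ^ e + |deriv F ε|)
      (nhdsWithin 0 (Set.Ioi 0)) (nhds (c * t ^ e + |(0:ℝ)|)) :=
    Filter.Tendsto.add tendsto_const_nhds htend.abs
  have := ge_of_tendsto hlim hev
  simpa using this

lemma abs_derivF_le (hF : ContDiffOn ℝ 2 F (Set.Ici 0))
    (htend : Filter.Tendsto (deriv F) (nhdsWithin 0 (Set.Ioi 0)) (nhds 0))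
    {γ₂ p : ℝ} (hγ : 0 < γ₂) (hp : 1 < p)
    (hd2 : ∀ s : ℝ, 0 < s → |deriv (deriv F) s| ≤ γ₂ * (1 + s ^ 2) ^ ((p - 2) / 2)) :
    ∀ t : ℝ, 0 < t →
      |deriv F t| ≤ (1 + 1 / (p - 1)) * γ₂ * t * (1 + t ^ 2) ^ ((p - 2) / 2) := by
  intro t ht
  have hp1 : (0:ℝ) < p - 1 := by linarith
  have h1t : (0:ℝ) < 1 + t ^ 2 := by positivity
  have hKp : (1:ℝ) ≤ 1 + 1 / (p - 1) := by
    have : (0:ℝ) < 1 / (p - 1) := by positivity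
    linarith
  rcases le_or_gt 2 p with h2p | h2p
  · -- q ≥ 0 : use e = 1
    have hq : (0:ℝ) ≤ (p - 2) / 2 := by linarith
    have haux := abs_derivF_le_aux hF htend (e := 1)
      (c := γ₂ * (1 + t ^ 2) ^ ((p - 2) / 2)) (by positivity) ht ?_
    · rw [Real.rpow_one] at haux
      calc |deriv F t| ≤ γ₂ * (1 + t ^ 2) ^ ((p - 2) / 2) * t := haux
        _ ≤ (1 + 1 / (p - 1)) * γ₂ * t * (1 + t ^ 2) ^ ((p - 2) / 2) := by
            rw [show (1 + 1 / (p - 1)) * γ₂ * t * (1 + t ^ 2) ^ ((p - 2) / 2)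
              = (1 + 1 / (p - 1)) * (γ₂ * (1 + t ^ 2) ^ ((p - 2) / 2) * t) by ring]
            nlinarith [abs_nonneg (deriv F t), Real.rpow_nonneg (le_of_lt h1t) ((p-2)/2),
              mul_nonneg (mul_nonneg (le_of_lt hγ)
                (Real.rpow_nonneg (le_of_lt h1t) ((p-2)/2))) (le_of_lt ht)]
    · intro s hs hst
      have h1s : (0:ℝ) < 1 + s ^ 2 := by positivity
      have hmono : (1 + s ^ 2) ^ ((p - 2) / 2) ≤ (1 + t ^ 2) ^ ((p - 2) / 2) :=
        Real.rpow_le_rpow (le_of_lt h1s) (by nlinarith) hq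
      calc |deriv (deriv F) s| ≤ γ₂ * (1 + s ^ 2) ^ ((p - 2) / 2) := hd2 s hs
        _ ≤ γ₂ * (1 + t ^ 2) ^ ((p - 2) / 2) := by nlinarith
        _ = γ₂ * (1 + t ^ 2) ^ ((p - 2) / 2) * 1 * s ^ ((1:ℝ) - 1) := by
            rw [show (1:ℝ) - 1 = 0 by ring, Real.rpow_zero]; ring
  · -- q < 0 : use e = p - 1
    have hq : (p - 2) / 2 ≤ 0 := by linarith
    set c := γ₂ * (1 + t ^ 2) ^ ((p - 2) / 2) * t ^ (2 - p) / (p - 1) with hcdef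
    have hc : 0 ≤ c := by
      apply div_nonneg _ (le_of_lt hp1)
      positivity
    have haux := abs_derivF_le_aux hF htend (e := p - 1) (c := c) hc ht ?_
    · have hct : c * t ^ (p - 1) = γ₂ * (1 + t ^ 2) ^ ((p - 2) / 2) * t / (p - 1) := by
        rw [hcdef]
        rw [div_mul_eq_mul_div]
        congr 1
        rw [mul_assoc, ← Real.rpow_add ht]
        norm_num
      rw [hct] at haux
      calc |deriv F t| ≤ γ₂ * (1 + t ^ 2) ^ ((p - 2) / 2) * t / (p - 1) := haux
        _ ≤ (1 + 1 / (p - 1)) * γ₂ * t * (1 + t ^ 2) ^ ((p - 2) / 2) := by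
            rw [div_le_iff₀ hp1]
            have hnn : (0:ℝ) ≤ γ₂ * t * (1 + t ^ 2) ^ ((p - 2) / 2) := by positivity
            have : (1:ℝ) ≤ (1 + 1 / (p - 1)) * (p - 1) := by
              rw [add_mul, one_mul, div_mul_cancel₀ _ (ne_of_gt hp1)]
              linarith
            nlinarith
    · intro s hs hst
      have h1s : (0:ℝ) < 1 + s ^ 2 := by positivity
      have hce : c * (p - 1) * s ^ (p - 1 - 1)
          = γ₂ * ((1 + t ^ 2) ^ ((p - 2) / 2) * t ^ (2 - p) * s ^ (p - 2)) := by
        rw [hcdef]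
        rw [div_mul_cancel₀ _ (ne_of_gt hp1)]
        rw [show p - 1 - 1 = p - 2 by ring]
        ring
      rw [hce]
      refine le_trans (hd2 s hs) ?_
      rw [mul_le_mul_iff_right₀ hγ]
      -- (1+s²)^q ≤ (1+t²)^q · (s/t)^(p-2)
      have hst' : (s / t) ^ (p - 2) = s ^ (p - 2) * t ^ (2 - p) := by
        rw [Real.div_rpow (le_of_lt hs) (le_of_lt ht)]
        rw [show (2:ℝ) - p = -(p - 2) by ring, Real.rpow_neg (le_of_lt ht), div_eq_mul_inv]
      have hkey : (1 + s ^ 2) ^ ((p - 2) / 2)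
          ≤ (1 + t ^ 2) ^ ((p - 2) / 2) * (s / t) ^ (p - 2) := by
        have hbase : (0:ℝ) < (1 + t ^ 2) * (s / t) ^ 2 := by positivity
        have hle : (1 + t ^ 2) * (s / t) ^ 2 ≤ 1 + s ^ 2 := by
          rw [div_pow, show (1 + t ^ 2) * (s ^ 2 / t ^ 2) = (1 + t ^ 2) * s ^ 2 / t ^ 2 by ring,
            div_le_iff₀ (by positivity : (0:ℝ) < t ^ 2)]
          nlinarith
        have h2 := Real.rpow_le_rpow_of_nonpos hbase hle hq
        have h3 : ((1 + t ^ 2) * (s / t) ^ 2) ^ ((p - 2) / 2)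
            = (1 + t ^ 2) ^ ((p - 2) / 2) * ((s / t) ^ 2) ^ ((p - 2) / 2) :=
          Real.mul_rpow (le_of_lt h1t) (by positivity)
        have h4 : ((s / t) ^ 2 : ℝ) ^ ((p - 2) / 2) = (s / t) ^ (p - 2) := by
          rw [← Real.rpow_natCast (s / t) 2, ← Real.rpow_mul (by positivity)]
          congr 1
          ring
        rw [h3, h4] at h2
        exact h2
      rw [hst'] at hkey
      calc (1 + s ^ 2) ^ ((p - 2) / 2)
          ≤ (1 + t ^ 2) ^ ((p - 2) / 2) * (s ^ (p - 2) * t ^ (2 - p)) := hkey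
        _ = (1 + t ^ 2) ^ ((p - 2) / 2) * t ^ (2 - p) * s ^ (p - 2) := by ring


/-! ### rpow bridging lemmas -/

lemma one_le_rpow_abs (x : ℝ) (hx : 1 ≤ x) (q : ℝ) : (1:ℝ) ≤ x ^ |q| :=
  Real.one_le_rpow hx (abs_nonneg q)

lemma bridge1 {q b c : ℝ} (hb : 0 ≤ b) (hbc : b ≤ c) :
    (1 + c ^ 2) ^ q ≤ (2:ℝ) ^ |q| * (1 + b ^ 2 + c ^ 2) ^ q := by
  rcases le_or_gt 0 q with hq | hq
  · have h1 : ((1:ℝ) + c ^ 2) ^ q ≤ (1 + b ^ 2 + c ^ 2) ^ q :=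
      Real.rpow_le_rpow (by positivity) (by nlinarith) hq
    have h2 : (1:ℝ) ≤ (2:ℝ) ^ |q| := one_le_rpow_abs 2 (by norm_num) q
    nlinarith [Real.rpow_nonneg (show (0:ℝ) ≤ 1 + b ^ 2 + c ^ 2 by positivity) q]
  · have h1 : (1 + b ^ 2 + c ^ 2 : ℝ) ≤ 2 * (1 + c ^ 2) := by nlinarith
    have h2 : ((2:ℝ) * (1 + c ^ 2)) ^ q ≤ (1 + b ^ 2 + c ^ 2) ^ q :=
      Real.rpow_le_rpow_of_nonpos (by positivity) h1 (le_of_lt hq)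
    have h3 : ((2:ℝ) * (1 + c ^ 2)) ^ q = 2 ^ q * (1 + c ^ 2) ^ q :=
      Real.mul_rpow (by norm_num) (by positivity)
    have h4 : (0:ℝ) < (2:ℝ) ^ q := Real.rpow_pos_of_pos (by norm_num) q
    rw [abs_of_neg hq, Real.rpow_neg (by norm_num : (0:ℝ) ≤ 2)]
    calc (1 + c ^ 2) ^ q = ((2:ℝ) ^ q)⁻¹ * (((2:ℝ) * (1 + c ^ 2)) ^ q) := by
          rw [h3, ← mul_assoc, inv_mul_cancel₀ (ne_of_gt h4), one_mul]
      _ ≤ ((2:ℝ) ^ q)⁻¹ * (1 + b ^ 2 + c ^ 2) ^ q := by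
          apply mul_le_mul_of_nonneg_left h2 (le_of_lt (inv_pos.mpr h4))

lemma bridge2 {q b c s : ℝ} (hbs : b ≤ s) (hsc : s ≤ c) (h2b : c ≤ 2 * b) (hb : 0 ≤ b) :
    (1 + s ^ 2) ^ q ≤ (4:ℝ) ^ |q| * (1 + c ^ 2) ^ q := by
  rcases le_or_gt 0 q with hq | hq
  · have h1 : ((1:ℝ) + s ^ 2) ^ q ≤ (1 + c ^ 2) ^ q :=
      Real.rpow_le_rpow (by positivity) (by nlinarith) hq
    have h2 : (1:ℝ) ≤ (4:ℝ) ^ |q| := one_le_rpow_abs 4 (by norm_num) q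
    nlinarith [Real.rpow_nonneg (show (0:ℝ) ≤ 1 + c ^ 2 by positivity) q]
  · have h1 : (1 + c ^ 2 : ℝ) ≤ 4 * (1 + s ^ 2) := by nlinarith
    have h2 : ((4:ℝ) * (1 + s ^ 2)) ^ q ≤ (1 + c ^ 2) ^ q :=
      Real.rpow_le_rpow_of_nonpos (by positivity) h1 (le_of_lt hq)
    have h3 : ((4:ℝ) * (1 + s ^ 2)) ^ q = 4 ^ q * (1 + s ^ 2) ^ q :=
      Real.mul_rpow (by norm_num) (by positivity)
    have h4 : (0:ℝ) < (4:ℝ) ^ q := Real.rpow_pos_of_pos (by norm_num) q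
    rw [abs_of_neg hq, Real.rpow_neg (by norm_num : (0:ℝ) ≤ 4)]
    calc (1 + s ^ 2) ^ q = ((4:ℝ) ^ q)⁻¹ * (((4:ℝ) * (1 + s ^ 2)) ^ q) := by
          rw [h3, ← mul_assoc, inv_mul_cancel₀ (ne_of_gt h4), one_mul]
      _ ≤ ((4:ℝ) ^ q)⁻¹ * (1 + c ^ 2) ^ q := by
          apply mul_le_mul_of_nonneg_left h2 (le_of_lt (inv_pos.mpr h4))

end Aux


open Filter Topology Aux in
set_option maxHeartbeats 1000000 in
/-- Local Lipschitz continuity of the extra stress: there is `c₂ > 0` depending only on `n`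
and `p` (independent of `γ₁, γ₂`) such that for every `p`-potential `F` and all symmetric
`B, C`, `|S(B) - S(C)| ≤ c₂ γ₂ (1 + |B|² + |C|²)^((p-2)/2) |B - C|`. -/
theorem stress_lipschitz (n : ℕ) (hn : 1 ≤ n) (p : ℝ) (hp : 1 < p) :
    ∃ c₂ : ℝ, 0 < c₂ ∧ ∀ (γ₁ γ₂ : ℝ) (F : ℝ → ℝ), IsPPotential n p γ₁ γ₂ F →
      ∀ B C : Fin n → Fin n → ℝ, IsSymmMat B → IsSymmMat C →
        frobNorm (stress F B - stress F C) ≤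
          c₂ * γ₂ * (1 + frobNorm B ^ 2 + frobNorm C ^ 2) ^ ((p - 2) / 2)
            * frobNorm (B - C) := by
  classical
  have hp1 : (0:ℝ) < p - 1 := by linarith
  set K : ℝ := 1 + 1 / (p - 1) with hKdef
  have hK1 : (1:ℝ) ≤ K := by
    have : (0:ℝ) < 1 / (p - 1) := by positivity
    rw [hKdef]; linarith
  have hK0 : (0:ℝ) < K := lt_of_lt_of_le one_pos hK1
  set Aq : ℝ := (4:ℝ) ^ |(p - 2) / 2| with hAqdef
  set Bq : ℝ := (2:ℝ) ^ |(p - 2) / 2| with hBqdef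
  have hAq1 : (1:ℝ) ≤ Aq := one_le_rpow_abs 4 (by norm_num) _
  have hBq1 : (1:ℝ) ≤ Bq := one_le_rpow_abs 2 (by norm_num) _
  have hAq0 : (0:ℝ) < Aq := lt_of_lt_of_le one_pos hAq1
  have hBq0 : (0:ℝ) < Bq := lt_of_lt_of_le one_pos hBq1
  refine ⟨Bq * (Aq + 4 * K), by nlinarith, ?_⟩
  intro γ₁ γ₂ F hP B₀ C₀ hB₀ hC₀
  have hγ₁ := hP.gamma₁_pos
  have hγ₂ := hP.gamma₂_pos
  set i0 : Fin n := ⟨0, hn⟩ with hi0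
  have hsm := hP.smooth
  -- second derivative bounds for F
  have hub : ∀ t : ℝ, 0 < t → |deriv (deriv F) t| ≤ γ₂ * (1 + t ^ 2) ^ ((p - 2) / 2) := by
    intro t ht
    have h := hP.upper (t • em i0) (em i0) (em i0)
      (smul_em_symm i0 t) (em_symm i0) (em_symm i0)
    rw [iterated_two_eq hsm i0 ht] at h
    rw [frobNorm_smul_em, frobNorm_em, sq_abs] at h
    simpa using h
  have hlb : ∀ t : ℝ, 0 < t → 0 ≤ deriv (deriv F) t := by
    intro t ht
    have h := hP.lower (t • em i0) (em i0) (smul_em_symm i0 t) (em_symm i0)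
    rw [iterated_two_eq hsm i0 ht] at h
    rw [frobNorm_smul_em, frobNorm_em, sq_abs] at h
    have h2 : (0:ℝ) ≤ γ₁ * (1 + t ^ 2) ^ ((p - 2) / 2) * 1 ^ 2 := by positivity
    calc (0:ℝ) ≤ γ₁ * (1 + t ^ 2) ^ ((p - 2) / 2) * 1 ^ 2 := h2
      _ ≤ deriv (deriv F) t := h
  -- differentiability of `fderiv Φ` at `0`
  have hzero_symm : IsSymmMat (0 : Fin n → Fin n → ℝ) := fun i j => rfl
  have hdiff0 : DifferentiableAt ℝ (fderiv ℝ (inducedPot F)) (0 : Fin n → Fin n → ℝ) := by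
    by_contra hnd
    have h0 : fderiv ℝ (fderiv ℝ (inducedPot F)) (0 : Fin n → Fin n → ℝ) = 0 :=
      fderiv_zero_of_not_differentiableAt hnd
    have h := hP.lower 0 (em i0) hzero_symm (em_symm i0)
    rw [iteratedFDeriv_two_apply] at h
    simp only [Matrix.cons_val_zero, Matrix.cons_val_one, Matrix.head_cons] at h
    rw [h0] at h
    rw [frobNorm_zero, frobNorm_em] at h
    simp only [ContinuousLinearMap.zero_apply] at h
    have hpos : (0:ℝ) < γ₁ * (1 + (0:ℝ) ^ 2) ^ ((p - 2) / 2) * 1 ^ 2 := by positivity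
    linarith
  have htend := tendsto_derivF_zero hsm i0 hdiff0
  have hF' : ∀ t : ℝ, 0 < t →
      |deriv F t| ≤ K * γ₂ * t * (1 + t ^ 2) ^ ((p - 2) / 2) := by
    intro t ht
    have := abs_derivF_le hsm htend hγ₂ hp hub t ht
    calc |deriv F t| ≤ (1 + 1 / (p - 1)) * γ₂ * t * (1 + t ^ 2) ^ ((p - 2) / 2) := this
      _ = K * γ₂ * t * (1 + t ^ 2) ^ ((p - 2) / 2) := by rw [hKdef]
  have hmono : ∀ a b : ℝ, 0 < a → a ≤ b → deriv F a ≤ deriv F b :=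
    fun a b ha hab => derivF_mono hsm hlb ha hab
  have hFnn : ∀ t : ℝ, 0 < t → 0 ≤ deriv F t := by
    intro t ht
    refine le_of_tendsto htend ?_
    filter_upwards [Ioo_mem_nhdsGT_of_mem (Set.mem_Ico.mpr ⟨le_refl (0:ℝ), ht⟩)] with ε hε
    exact hmono ε t hε.1 (le_of_lt hε.2)
  -- the key ordered estimate
  have key : ∀ B C : Fin n → Fin n → ℝ, frobNorm B ≤ frobNorm C →
      frobNorm (stress F B - stress F C) ≤
        Bq * (Aq + 4 * K) * γ₂ * (1 + frobNorm B ^ 2 + frobNorm C ^ 2) ^ ((p - 2) / 2)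
          * frobNorm (B - C) := by
    intro B C hbc
    have hb0 : 0 ≤ frobNorm B := frobNorm_nonneg B
    have hc0 : 0 ≤ frobNorm C := frobNorm_nonneg C
    set b := frobNorm B with hbdef
    set c := frobNorm C with hcdef
    have hRq : (0:ℝ) ≤ (1 + b ^ 2 + c ^ 2) ^ ((p - 2) / 2) :=
      Real.rpow_nonneg (by positivity) _
    have hBCnn : 0 ≤ frobNorm (B - C) := frobNorm_nonneg _
    rcases eq_or_lt_of_le hc0 with hc | hc
    · -- both matrices vanish
      have hbz : b = 0 := le_antisymm (hc ▸ hbc) hb0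
      have hB : B = 0 := frobNorm_eq_zero_iff.mp hbz
      have hC : C = 0 := frobNorm_eq_zero_iff.mp (hc.symm)
      have hLHS : frobNorm (stress F B - stress F C) = 0 := by
        rw [hB, hC, sub_self, frobNorm_zero]
      rw [hLHS]
      have h4K : (0:ℝ) < Aq + 4 * K := by linarith
      have : (0:ℝ) ≤ Bq * (Aq + 4 * K) * γ₂ := le_of_lt (mul_pos (mul_pos hBq0 h4K) hγ₂)
      exact mul_nonneg (mul_nonneg this hRq) hBCnn
    · have hcb : c - b ≤ frobNorm (B - C) := by
        have h1 := abs_frobNorm_sub B C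
        have h2 := neg_abs_le (frobNorm B - frobNorm C)
        rw [hbdef, hcdef] at *
        linarith
      have hC0 : C ≠ 0 := by
        intro h; rw [hcdef, h, frobNorm_zero] at hc; exact lt_irrefl 0 hc
      have hSC : stress F C = (deriv F c / c) • C := by rw [stress, if_neg hC0]
      have hFc := hF' c hc
      have hFcn := hFnn c hc
      have hFc' : deriv F c ≤ K * γ₂ * c * (1 + c ^ 2) ^ ((p - 2) / 2) :=
        le_trans (le_abs_self _) hFc
      have hbr1 : (1 + c ^ 2) ^ ((p - 2) / 2) ≤ Bq * (1 + b ^ 2 + c ^ 2) ^ ((p - 2) / 2) :=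
        bridge1 hb0 hbc
      have hq1 : (0:ℝ) ≤ (1 + c ^ 2) ^ ((p - 2) / 2) := Real.rpow_nonneg (by positivity) _
      rcases le_or_gt c (2 * b) with hnear | hfar
      · -- comparable norms
        have hb : 0 < b := by linarith
        have hB0 : B ≠ 0 := by
          intro h; rw [hbdef, h, frobNorm_zero] at hb; exact lt_irrefl 0 hb
        have hSB : stress F B = (deriv F b / b) • B := by rw [stress, if_neg hB0]
        have hid : stress F B - stress F C
            = (deriv F c / c) • (B - C) + (deriv F b / b - deriv F c / c) • B := by
          rw [hSB, hSC]
          module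
        rw [hid]
        refine le_trans (frobNorm_add_le _ _) ?_
        rw [frobNorm_smul, frobNorm_smul]
        have ht1 : |deriv F c / c| * frobNorm (B - C)
            ≤ K * γ₂ * (1 + c ^ 2) ^ ((p - 2) / 2) * frobNorm (B - C) := by
          refine mul_le_mul_of_nonneg_right ?_ hBCnn
          rw [abs_div, abs_of_pos hc, div_le_iff₀ hc]
          calc |deriv F c| ≤ K * γ₂ * c * (1 + c ^ 2) ^ ((p - 2) / 2) := hFc
            _ = K * γ₂ * (1 + c ^ 2) ^ ((p - 2) / 2) * c := by ring
        have hlip : |deriv F c - deriv F b| ≤ γ₂ * Aq * (1 + c ^ 2) ^ ((p - 2) / 2) * (c - b) := by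
          refine derivF_lipschitz hsm hb hbc ?_
          intro s hbs hst
          have hs : 0 < s := lt_of_lt_of_le hb hbs
          have hbr2 := bridge2 (q := (p - 2) / 2) hbs hst hnear hb0
          calc |deriv (deriv F) s| ≤ γ₂ * (1 + s ^ 2) ^ ((p - 2) / 2) := hub s hs
            _ ≤ γ₂ * (Aq * (1 + c ^ 2) ^ ((p - 2) / 2)) := by nlinarith
            _ = γ₂ * Aq * (1 + c ^ 2) ^ ((p - 2) / 2) := by ring
        have ht2 : |deriv F b / b - deriv F c / c| * b
            ≤ (Aq + K) * γ₂ * (1 + c ^ 2) ^ ((p - 2) / 2) * (c - b) := by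
          have habs : |deriv F b / b - deriv F c / c| * b
              = |(deriv F b / b - deriv F c / c) * b| := by
            rw [abs_mul, abs_of_nonneg hb0]
          have hexp : (deriv F b / b - deriv F c / c) * b
              = (deriv F b - deriv F c) + deriv F c * (c - b) / c := by
            field_simp
            ring
          rw [habs, hexp]
          refine le_trans (abs_add_le _ _) ?_
          have e1 : |deriv F b - deriv F c| ≤ γ₂ * Aq * (1 + c ^ 2) ^ ((p - 2) / 2) * (c - b) := by
            rw [abs_sub_comm]; exact hlip
          have e2 : |deriv F c * (c - b) / c| ≤ K * γ₂ * (1 + c ^ 2) ^ ((p - 2) / 2) * (c - b) := by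
            rw [abs_div, abs_of_pos hc, abs_mul,
              abs_of_nonneg (by linarith : (0:ℝ) ≤ c - b), abs_of_nonneg hFcn,
              div_le_iff₀ hc]
            calc deriv F c * (c - b)
                ≤ (K * γ₂ * c * (1 + c ^ 2) ^ ((p - 2) / 2)) * (c - b) :=
                  mul_le_mul_of_nonneg_right hFc' (by linarith)
              _ = K * γ₂ * (1 + c ^ 2) ^ ((p - 2) / 2) * (c - b) * c := by ring
          linarith
        have hsum : |deriv F c / c| * frobNorm (B - C) + |deriv F b / b - deriv F c / c| * b
            ≤ (Aq + 2 * K) * γ₂ * (1 + c ^ 2) ^ ((p - 2) / 2) * frobNorm (B - C) := by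
          have h3 : (Aq + K) * γ₂ * (1 + c ^ 2) ^ ((p - 2) / 2) * (c - b)
              ≤ (Aq + K) * γ₂ * (1 + c ^ 2) ^ ((p - 2) / 2) * frobNorm (B - C) := by
            refine mul_le_mul_of_nonneg_left hcb ?_
            positivity
          linarith [ht1, ht2, h3]
        refine le_trans hsum ?_
        have hBfac : (Aq + 2 * K) * γ₂ * (1 + c ^ 2) ^ ((p - 2) / 2)
            ≤ Bq * (Aq + 4 * K) * γ₂ * (1 + b ^ 2 + c ^ 2) ^ ((p - 2) / 2) := by
          calc (Aq + 2 * K) * γ₂ * (1 + c ^ 2) ^ ((p - 2) / 2)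
              ≤ (Aq + 2 * K) * γ₂ * (Bq * (1 + b ^ 2 + c ^ 2) ^ ((p - 2) / 2)) := by
                refine mul_le_mul_of_nonneg_left hbr1 ?_
                have hA2K : (0:ℝ) < Aq + 2 * K := by linarith
                exact le_of_lt (mul_pos hA2K hγ₂)
            _ = Bq * (Aq + 2 * K) * γ₂ * (1 + b ^ 2 + c ^ 2) ^ ((p - 2) / 2) := by ring
            _ ≤ Bq * (Aq + 4 * K) * γ₂ * (1 + b ^ 2 + c ^ 2) ^ ((p - 2) / 2) := by
                refine mul_le_mul_of_nonneg_right ?_ hRq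
                nlinarith [mul_pos (mul_pos hBq0 hK0) hγ₂]
        exact mul_le_mul_of_nonneg_right hBfac hBCnn
      · -- far apart : `c < 2 b` fails, i.e. `2 b < c`
        have hcBC : c ≤ 2 * frobNorm (B - C) := by linarith
        have hSBn : frobNorm (stress F B) ≤ deriv F c := by
          by_cases hB0 : B = 0
          · rw [hB0, stress, if_pos rfl, frobNorm_zero]; exact hFcn
          · have hb : 0 < b := frobNorm_pos hB0
            rw [stress, if_neg hB0, frobNorm_smul, abs_div, abs_of_pos hb, ← hbdef,
              div_mul_cancel₀ _ (ne_of_gt hb), abs_of_nonneg (hFnn b hb)]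
            exact hmono b c hb hbc
        have hSCn : frobNorm (stress F C) ≤ deriv F c := by
          rw [hSC, frobNorm_smul, abs_div, abs_of_pos hc, ← hcdef,
            div_mul_cancel₀ _ (ne_of_gt hc), abs_of_nonneg hFcn]
        calc frobNorm (stress F B - stress F C)
            ≤ frobNorm (stress F B) + frobNorm (stress F C) := frobNorm_sub_le' _ _
          _ ≤ 2 * deriv F c := by linarith
          _ ≤ 2 * (K * γ₂ * c * (1 + c ^ 2) ^ ((p - 2) / 2)) := by linarith
          _ ≤ 2 * (K * γ₂ * (2 * frobNorm (B - C)) * (1 + c ^ 2) ^ ((p - 2) / 2)) := by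
              have h1 : K * γ₂ * c ≤ K * γ₂ * (2 * frobNorm (B - C)) := by
                refine mul_le_mul_of_nonneg_left hcBC ?_
                exact le_of_lt (mul_pos hK0 hγ₂)
              linarith [mul_le_mul_of_nonneg_right h1 hq1]
          _ = 4 * K * γ₂ * (1 + c ^ 2) ^ ((p - 2) / 2) * frobNorm (B - C) := by ring
          _ ≤ 4 * K * γ₂ * (Bq * (1 + b ^ 2 + c ^ 2) ^ ((p - 2) / 2)) * frobNorm (B - C) := by
              refine mul_le_mul_of_nonneg_right ?_ hBCnn
              refine mul_le_mul_of_nonneg_left hbr1 ?_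
              positivity
          _ = Bq * (4 * K) * γ₂ * (1 + b ^ 2 + c ^ 2) ^ ((p - 2) / 2) * frobNorm (B - C) := by
              ring
          _ ≤ Bq * (Aq + 4 * K) * γ₂ * (1 + b ^ 2 + c ^ 2) ^ ((p - 2) / 2) * frobNorm (B - C) := by
              have h2 : Bq * (4 * K) * γ₂ ≤ Bq * (Aq + 4 * K) * γ₂ := by
                nlinarith [mul_pos (mul_pos hBq0 hAq0) hγ₂]
              exact mul_le_mul_of_nonneg_right
                (mul_le_mul_of_nonneg_right h2 hRq) hBCnn
  -- conclude, by symmetry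
  rcases le_total (frobNorm B₀) (frobNorm C₀) with h | h
  · exact key B₀ C₀ h
  · have hk := key C₀ B₀ h
    calc frobNorm (stress F B₀ - stress F C₀)
        = frobNorm (stress F C₀ - stress F B₀) := by
          rw [← frobNorm_neg (stress F C₀ - stress F B₀), neg_sub]
      _ ≤ Bq * (Aq + 4 * K) * γ₂ * (1 + frobNorm C₀ ^ 2 + frobNorm B₀ ^ 2) ^ ((p - 2) / 2)
            * frobNorm (C₀ - B₀) := hk
      _ = Bq * (Aq + 4 * K) * γ₂ * (1 + frobNorm B₀ ^ 2 + frobNorm C₀ ^ 2) ^ ((p - 2) / 2)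
            * frobNorm (B₀ - C₀) := by
          rw [show (1 + frobNorm C₀ ^ 2 + frobNorm B₀ ^ 2) = (1 + frobNorm B₀ ^ 2 + frobNorm C₀ ^ 2) by ring,
            ← frobNorm_neg (C₀ - B₀), neg_sub]
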